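/- For any non-backtracking walk w ∈ W_{e,−e} (a walk from a directed edge e to its reversal −e), one has λ(w) = −λ(w⁻¹), and λ(w) ∈ {i·x(w), −i·x(w)}, where i is the imaginary unit. -/

import Mathlib

open scoped BigOperators

/-- The straight line segment drawn for an (unordered) edge, given the
positions of the vertices in the complex plane. -/
def segOf {α : Type*} (pos : α → ℂ) : Sym2 α → Set ℂ :=
  Sym2.lift ⟨fun u v => segment ℝ (pos u) (pos v), fun u v => segment_symm ℝ (pos u) (pos v)⟩

/-- A finite graph embedded in the complex plane: vertices are distinct points
of `ℂ`, edges are unordered pairs of distinct vertices drawn as straight line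
segments which pairwise intersect only at common endpoints, and no vertex lies
on an edge which does not contain it. -/
structure PlaneGraph where
  V : Type
  fintypeV : Fintype V
  decEqV : DecidableEq V
  pos : V → ℂ
  pos_inj : Function.Injective pos
  E : Finset (Sym2 V)
  not_diag : ∀ e ∈ E, ¬ e.IsDiag
  edges_meet : ∀ e₁ ∈ E, ∀ e₂ ∈ E, e₁ ≠ e₂ → ∀ p : ℂ,
    p ∈ segOf pos e₁ → p ∈ segOf pos e₂ → ∃ w : V, w ∈ e₁ ∧ w ∈ e₂ ∧ p = pos w
  vertex_on_edge : ∀ e ∈ E, ∀ w : V, pos w ∈ segOf pos e → w ∈ e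

attribute [instance] PlaneGraph.fintypeV PlaneGraph.decEqV

namespace PlaneGraph

variable (G : PlaneGraph)

/-- A directed edge: an ordered pair of vertices whose underlying
unordered pair is an edge of the graph. -/
abbrev DEdge : Type := {p : G.V × G.V // s(p.1, p.2) ∈ G.E}

/-- The reversal `-e` of a directed edge. -/
def rev (e : G.DEdge) : G.DEdge :=
  ⟨(e.val.2, e.val.1), by rw [Sym2.eq_swap]; exact e.property⟩

/-- The undirected version `ē` of a directed edge. -/
def undir (e : G.DEdge) : Sym2 G.V := s(e.val.1, e.val.2)

/-- The turning angle `∠(e,g) = Arg((h_g - t_g)/(h_e - t_e)) ∈ (-π, π]`. -/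
noncomputable def tangle (e g : G.DEdge) : ℝ :=
  Complex.arg ((G.pos g.val.2 - G.pos g.val.1) / (G.pos e.val.2 - G.pos e.val.1))

/-- The Kac–Ward transition matrix `Λ`, indexed by directed edges. -/
noncomputable def transMatrix (x : Sym2 G.V → ℝ) : Matrix G.DEdge G.DEdge ℂ :=
  fun e g =>
    if e.val.2 = g.val.1 ∧ g ≠ G.rev e then
      (x (G.undir e) : ℂ) * Complex.exp (Complex.I / 2 * (G.tangle e g : ℂ))
    else 0

/-- A non-backtracking walk of length `n ≥ 1`, encoded as the list
`(w₁, …, w_{n+1})` of its `n+1` directed edges: consecutive edges are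
incident head-to-tail and the walk never immediately reverses an edge. -/
def IsWalk (l : List G.DEdge) : Prop :=
  2 ≤ l.length ∧ l.Chain' (fun e g => e.val.2 = g.val.1 ∧ g ≠ G.rev e)

/-- The length `|w|` (number of steps) of a walk given as a list of edges. -/
def len (l : List G.DEdge) : ℕ := l.length - 1

/-- The weight `λ(w) = ∏_{i=1}^{n} Λ_{w_i, w_{i+1}}` of a walk. -/
noncomputable def wlam (x : Sym2 G.V → ℝ) (l : List G.DEdge) : ℂ :=
  (List.zipWith (fun e g => G.transMatrix x e g) l l.tail).prod

/-- The edge weight `x(w) = ∏_{i=1}^{n} x_{\bar{w_i}}` of a walk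
(the weight of the last edge is not included). -/
def wx (x : Sym2 G.V → ℝ) (l : List G.DEdge) : ℝ :=
  (l.dropLast.map (fun e => x (G.undir e))).prod

/-- The total turning angle `α(w) = Σ_{i=1}^{n} ∠(w_i, w_{i+1})` of a walk. -/
noncomputable def walpha (l : List G.DEdge) : ℝ :=
  (List.zipWith (fun e g => G.tangle e g) l l.tail).sum

/-- The reversal `w⁻¹ = (-w_{n+1}, …, -w₁)` of a walk. -/
def wrev (l : List G.DEdge) : List G.DEdge := (l.map G.rev).reverse

/-- The concatenation `w ⊕ w'` of two walks, the first ending with the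
directed edge with which the second starts. -/
def wconcat (l l' : List G.DEdge) : List G.DEdge := l ++ l'.tail

/-- A (rooted) loop: a walk of length at least `2` which starts and ends
with the same directed edge. -/
def IsLoop (l : List G.DEdge) : Prop :=
  G.IsWalk l ∧ 3 ≤ l.length ∧ l.head? = l.getLast?

/-- The number of times a loop `ℓ = (ℓ₁, …, ℓ_{n+1})` visits a directed
edge `e`, i.e. the number of occurrences of `e` among `ℓ₁, …, ℓ_n`. -/
def visits (l : List G.DEdge) (e : G.DEdge) : ℕ := l.dropLast.count e

/-- A loop `ℓ` of length `n` is self-avoiding if each vertex appearing in it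
appears in exactly two of the directed edges `ℓ₁, …, ℓ_n`. -/
def SelfAvoiding (l : List G.DEdge) : Prop :=
  G.IsLoop l ∧ ∀ v : G.V,
    l.dropLast.countP (fun e => decide (v = e.val.1 ∨ v = e.val.2)) ≠ 0 →
    l.dropLast.countP (fun e => decide (v = e.val.1 ∨ v = e.val.2)) = 2

/-- The degree of a vertex: the number of edges containing it. -/
def degV (v : G.V) : ℕ := (G.E.filter (fun e => v ∈ e)).card

/-- A finite set of edges is even if every vertex belongs to an even number
of its edges. -/
def IsEvenSet (H : Finset (Sym2 G.V)) : Prop :=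
  ∀ v : G.V, Even ((H.filter (fun e => v ∈ e)).card)

instance : DecidablePred G.IsEvenSet := fun H =>
  decidable_of_iff (∀ v : G.V, Even ((H.filter (fun e => v ∈ e)).card)) Iff.rfl

/-- The generating function `Z = Σ_{H even} ∏_{ē ∈ H} x_ē` of even
subgraphs. -/
def Z (x : Sym2 G.V → ℝ) : ℝ :=
  ∑ H ∈ G.E.powerset.filter G.IsEvenSet, ∏ e ∈ H, x e

end PlaneGraph

namespace PlaneGraph

variable (G : PlaneGraph)

/-- direction vector of a directed edge -/
noncomputable def dir (e : G.DEdge) : ℂ := G.pos e.val.2 - G.pos e.val.1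

lemma dir_ne_zero (e : G.DEdge) : G.dir e ≠ 0 := by
  intro h
  have h2 : e.val.2 = e.val.1 := G.pos_inj (sub_eq_zero.mp h)
  exact G.not_diag _ e.property (by rw [Sym2.mk_isDiag_iff]; exact h2.symm)

lemma rev_rev (e : G.DEdge) : G.rev (G.rev e) = e := rfl

lemma dir_rev (e : G.DEdge) : G.dir (G.rev e) = - G.dir e := by
  simp only [dir, rev]; ring

lemma undir_rev (e : G.DEdge) : G.undir (G.rev e) = G.undir e := by
  simp only [undir, rev]; exact Sym2.eq_swap

lemma tangle_eq (e g : G.DEdge) : G.tangle e g = Complex.arg (G.dir g / G.dir e) := rfl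

lemma tangle_ne_pi (e g : G.DEdge) (h : e.val.2 = g.val.1) (hne : g ≠ G.rev e) :
    G.tangle e g ≠ Real.pi := by
  intro hpi
  rw [tangle_eq] at hpi
  obtain ⟨hre, him⟩ := Complex.arg_eq_pi_iff.mp hpi
  set z := G.dir g / G.dir e with hzdef
  have hz : z = ((z.re : ℝ) : ℂ) := Complex.ext rfl (by simpa using him)
  set r : ℝ := z.re with hrdef
  have hr : r < 0 := hre
  have hdg : G.dir g = (r : ℂ) * G.dir e := by
    rw [hzdef] at hz
    rw [div_eq_iff (G.dir_ne_zero e)] at hz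
    linear_combination hz
  have key : G.pos g.val.2 - G.pos e.val.2 =
      (r : ℂ) * (G.pos e.val.2 - G.pos e.val.1) := by
    have := hdg
    simp only [dir, h] at this ⊢
    linear_combination this
  have hg2ne1 : g.val.2 ≠ e.val.1 := by
    intro hh
    exact hne (Subtype.ext (Prod.ext h.symm hh))
  have hg12 : g.val.1 ≠ g.val.2 := fun hh =>
    G.not_diag _ g.property (by rw [Sym2.mk_isDiag_iff]; exact hh)
  have he12 : e.val.1 ≠ e.val.2 := fun hh =>
    G.not_diag _ e.property (by rw [Sym2.mk_isDiag_iff]; exact hh)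
  rcases le_total (-1 : ℝ) r with hcase | hcase
  · -- g.2 lands on segment of edge e
    have hmem : G.pos g.val.2 ∈ segment ℝ (G.pos e.val.1) (G.pos e.val.2) := by
      refine ⟨-r, 1 + r, by linarith, by linarith, by ring, ?_⟩
      simp only [Complex.real_smul]
      push_cast
      first | linear_combination key | linear_combination 2*key | linear_combination -2*key | linear_combination -key
    have hmem2 : G.pos g.val.2 ∈ segOf G.pos (s(e.val.1, e.val.2)) := by
      simpa only [segOf, Sym2.lift_mk] using hmem
    have := G.vertex_on_edge _ e.property _ hmem2
    rw [Sym2.mem_iff] at this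
    rcases this with h1 | h2
    · exact hg2ne1 h1
    · exact hg12 (h.symm.trans h2.symm)
  · -- e.1 lands on segment of edge g
    have hrne : (r : ℝ) ≠ 0 := ne_of_lt hr
    have hrC : (r : ℂ) ≠ 0 := by exact_mod_cast hrne
    have hmem : G.pos e.val.1 ∈ segment ℝ (G.pos g.val.1) (G.pos g.val.2) := by
      refine ⟨1 + 1/r, -(1/r), ?_, ?_, by ring, ?_⟩
      · have : -1 ≤ 1/r := by
          rw [le_div_iff_of_neg hr]; linarith
        linarith
      · have : 1/r < 0 := div_neg_of_pos_of_neg one_pos hr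
        linarith
      · simp only [Complex.real_smul, ← h]
        push_cast
        field_simp
        first | linear_combination key | linear_combination 2*key | linear_combination -2*key | linear_combination -key | linear_combination (r:ℂ)*key
    have hmem2 : G.pos e.val.1 ∈ segOf G.pos (s(g.val.1, g.val.2)) := by
      simpa only [segOf, Sym2.lift_mk] using hmem
    have := G.vertex_on_edge _ g.property _ hmem2
    rw [Sym2.mem_iff] at this
    rcases this with h1 | h2
    · exact he12 (h1.trans h.symm)
    · exact hg2ne1 h2.symm


lemma tangle_rev (e g : G.DEdge) (h : e.val.2 = g.val.1) (hne : g ≠ G.rev e) :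
    G.tangle (G.rev g) (G.rev e) = - G.tangle e g := by
  rw [tangle_eq, tangle_eq, dir_rev, dir_rev, neg_div_neg_eq,
    ← inv_div (G.dir g) (G.dir e), Complex.arg_inv]
  simp [← tangle_eq, G.tangle_ne_pi e g h hne]

/-- The chain condition on consecutive edges of a walk. -/
def cond (e g : G.DEdge) : Prop := e.val.2 = g.val.1 ∧ g ≠ G.rev e

lemma wlam_eq (x : Sym2 G.V → ℝ) :
    ∀ l : List G.DEdge, l.Chain' G.cond →
      G.wlam x l = ((G.wx x l : ℝ) : ℂ) *
        Complex.exp (Complex.I / 2 * ((G.walpha l : ℝ) : ℂ)) := by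
  intro l
  induction l with
  | nil => intro _; simp [wlam, wx, walpha]
  | cons e t ih =>
    cases t with
    | nil => intro _; simp [wlam, wx, walpha]
    | cons g t' =>
      intro hc
      unfold List.Chain' at hc
      rw [List.isChain_cons_cons] at hc
      obtain ⟨hcond, hc'⟩ := hc
      have h1 : G.wlam x (e :: g :: t') = G.transMatrix x e g * G.wlam x (g :: t') := by
        simp [wlam]
      have h2 : G.wx x (e :: g :: t') = x (G.undir e) * G.wx x (g :: t') := by
        simp [wx]
      have h3 : G.walpha (e :: g :: t') = G.tangle e g + G.walpha (g :: t') := by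
        simp [walpha]
      obtain ⟨hc1, hc2⟩ := hcond
      rw [h1, h2, h3, ih hc', transMatrix, if_pos (⟨hc1, hc2⟩ : _ ∧ _)]
      push_cast
      rw [mul_add, Complex.exp_add]
      ring

/-- unit direction -/
noncomputable def rho (e : G.DEdge) : ℂ := G.dir e / ((‖G.dir e‖ : ℝ) : ℂ)

lemma rho_ne_zero (e : G.DEdge) : G.rho e ≠ 0 := by
  have := G.dir_ne_zero e
  simp [rho, this]

lemma rho_rev (e : G.DEdge) : G.rho (G.rev e) = - G.rho e := by
  rw [rho, rho, dir_rev]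
  simp [neg_div]

lemma exp_tangle (e g : G.DEdge) :
    Complex.exp (((G.tangle e g : ℝ) : ℂ) * Complex.I) = G.rho g / G.rho e := by
  rw [tangle_eq]
  have hz : (G.dir g / G.dir e) ≠ 0 := div_ne_zero (G.dir_ne_zero g) (G.dir_ne_zero e)
  have habs : ((‖G.dir g / G.dir e‖ : ℝ) : ℂ) ≠ 0 := by
    simpa using hz
  have this2 := Complex.norm_mul_exp_arg_mul_I (G.dir g / G.dir e)
  have hexp : Complex.exp (((G.dir g / G.dir e).arg : ℂ) * Complex.I) =
      (G.dir g / G.dir e) / ((‖G.dir g / G.dir e‖ : ℝ) : ℂ) := by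
    rw [eq_div_iff habs, mul_comm]
    exact this2
  rw [hexp, rho, rho, norm_div]
  have h1 := G.dir_ne_zero e
  have h2 := G.dir_ne_zero g
  have h3 : ((‖G.dir e‖ : ℝ) : ℂ) ≠ 0 := by simpa using h1
  have h4 : ((‖G.dir g‖ : ℝ) : ℂ) ≠ 0 := by simpa using h2
  push_cast
  field_simp

lemma exp_walpha :
    ∀ l : List G.DEdge, ∀ a b : G.DEdge, l.head? = some a → l.getLast? = some b →
      Complex.exp (((G.walpha l : ℝ) : ℂ) * Complex.I) = G.rho b / G.rho a := by
  intro l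
  induction l with
  | nil => intro a b ha _; simp at ha
  | cons e t ih =>
    cases t with
    | nil =>
      intro a b ha hb
      simp only [List.head?_cons, Option.some_inj] at ha
      have hb2 : e = b := by simpa using hb
      obtain rfl := ha
      obtain rfl := hb2
      simp [walpha, div_self (G.rho_ne_zero e)]
    | cons g t' =>
      intro a b ha hb
      simp only [List.head?_cons, Option.some_inj] at ha
      obtain rfl := ha
      have hb' : (g :: t').getLast? = some b := by
        rw [← hb]; simp [List.getLast?_cons_cons]
      have h3 : G.walpha (e :: g :: t') = G.tangle e g + G.walpha (g :: t') := by
        simp [walpha]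
      rw [h3]
      push_cast
      rw [add_mul, Complex.exp_add, G.exp_tangle e g, ih g b rfl hb']
      field_simp [G.rho_ne_zero e, G.rho_ne_zero g, G.rho_ne_zero b]


lemma walpha_cons_cons (e g : G.DEdge) (t : List G.DEdge) :
    G.walpha (e :: g :: t) = G.tangle e g + G.walpha (g :: t) := by
  simp [walpha]

lemma walpha_append :
    ∀ (A : List G.DEdge) (a b : G.DEdge), A.getLast? = some a →
      G.walpha (A ++ [b]) = G.walpha A + G.tangle a b := by
  intro A
  induction A with
  | nil => intro a b ha; simp at ha
  | cons e t ih =>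
    cases t with
    | nil =>
      intro a b ha
      have : e = a := by simpa using ha
      subst this
      simp [walpha_cons_cons, walpha]
    | cons g t' =>
      intro a b ha
      have ha' : (g :: t').getLast? = some a := by
        rw [← ha]; simp [List.getLast?_cons_cons]
      have : (e :: g :: t') ++ [b] = e :: g :: (t' ++ [b]) := by simp
      rw [this, walpha_cons_cons]
      have : g :: (t' ++ [b]) = (g :: t') ++ [b] := by simp
      rw [this, ih a b ha', walpha_cons_cons]
      ring

lemma wrev_cons (e : G.DEdge) (t : List G.DEdge) :
    G.wrev (e :: t) = G.wrev t ++ [G.rev e] := by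
  simp [wrev]

lemma wrev_getLast?' (l : List G.DEdge) :
    (G.wrev l).getLast? = l.head?.map G.rev := by
  rw [wrev, List.getLast?_reverse]
  cases l <;> simp

lemma list_getLast?_map {α β : Type*} (f : α → β) :
    ∀ l : List α, (l.map f).getLast? = l.getLast?.map f := by
  intro l
  induction l with
  | nil => rfl
  | cons a t ih => cases t <;> simp_all

lemma wrev_head? (l : List G.DEdge) :
    (G.wrev l).head? = l.getLast?.map G.rev := by
  rw [wrev, List.head?_reverse, list_getLast?_map]

lemma walpha_wrev :
    ∀ l : List G.DEdge, l.Chain' G.cond → G.walpha (G.wrev l) = - G.walpha l := by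
  intro l
  induction l with
  | nil => intro _; simp [wrev, walpha]
  | cons e t ih =>
    cases t with
    | nil => intro _; simp [wrev, walpha]
    | cons g t' =>
      intro hc
      unfold List.Chain' at hc
      rw [List.isChain_cons_cons] at hc
      obtain ⟨⟨hc1, hc2⟩, hc'⟩ := hc
      rw [wrev_cons]
      have hlast : (G.wrev (g :: t')).getLast? = some (G.rev g) := by
        rw [wrev_getLast?']; simp
      rw [G.walpha_append _ _ _ hlast, ih hc', G.tangle_rev e g hc1 hc2,
        walpha_cons_cons]
      ring

lemma chain'_wrev (l : List G.DEdge) (h : l.Chain' G.cond) :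
    (G.wrev l).Chain' G.cond := by
  unfold List.Chain'
  rw [wrev, List.isChain_reverse, List.isChain_map]
  refine List.IsChain.imp ?_ h
  intro a b hab
  refine ⟨hab.1.symm, ?_⟩
  show G.rev a ≠ G.rev (G.rev b)
  rw [G.rev_rev b]
  exact fun hh => hab.2 hh.symm

lemma prod_map_getLast (f : G.DEdge → ℝ) (l : List G.DEdge) (b : G.DEdge)
    (h : l.getLast? = some b) : (l.map f).prod = (l.dropLast.map f).prod * f b := by
  have hne : l ≠ [] := by rintro rfl; simp at h
  rw [List.getLast?_eq_getLast hne, Option.some_inj] at h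
  conv_lhs => rw [← List.dropLast_append_getLast hne]
  rw [List.map_append, List.prod_append, h]
  simp

lemma wx_wrev (x : Sym2 G.V → ℝ) (l : List G.DEdge) (e : G.DEdge)
    (hh : l.head? = some e) (hl : l.getLast? = some (G.rev e)) (hlen : 2 ≤ l.length) :
    G.wx x (G.wrev l) = G.wx x l := by
  set f : G.DEdge → ℝ := fun e => x (G.undir e) with hf
  cases l with
  | nil => simp at hh
  | cons e' t =>
    have he' : e' = e := by simpa using hh
    subst he'
    have htne : t ≠ [] := by
      rintro rfl; simp at hlen
    have htlast : t.getLast? = some (G.rev e') := by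
      cases t with
      | nil => exact absurd rfl htne
      | cons g t' => rw [← hl]; simp [List.getLast?_cons_cons]
    have h1 : G.wx x (G.wrev (e' :: t)) = (t.map f).prod := by
      rw [wrev_cons, wx, List.dropLast_concat, wrev]
      rw [List.map_reverse, List.prod_reverse, List.map_map]
      refine congrArg List.prod (List.map_congr_left ?_)
      intro a _
      simp [hf, Function.comp, undir_rev]
    have h2 : G.wx x (e' :: t) = f e' * (t.dropLast.map f).prod := by
      rw [wx, List.dropLast_cons_of_ne_nil htne]
      simp [hf]
    rw [h1, h2, G.prod_map_getLast f t _ htlast]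
    have : f (G.rev e') = f e' := by simp [hf, undir_rev]
    rw [this]
    ring

end PlaneGraph

/-- For a walk `w ∈ W_{e,-e}` from a directed edge to its reversal,
`λ(w) = -λ(w⁻¹)` and `λ(w) = ± i·x(w)`. -/
theorem wlam_to_reversal (G : PlaneGraph) (x : Sym2 G.V → ℝ) (e : G.DEdge)
    (w : List G.DEdge) (hw : G.IsWalk w)
    (hhead : w.head? = some e) (hlast : w.getLast? = some (G.rev e)) :
    G.wlam x w = - G.wlam x (G.wrev w) ∧
      (G.wlam x w = Complex.I * ((G.wx x w : ℝ) : ℂ) ∨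
        G.wlam x w = -(Complex.I * ((G.wx x w : ℝ) : ℂ))) := by
  obtain ⟨hlen, hchain⟩ := hw
  set α : ℝ := G.walpha w with hα
  set n : ℂ := Complex.exp (Complex.I / 2 * (α : ℂ)) with hn
  have h1 : G.wlam x w = ((G.wx x w : ℝ) : ℂ) * n := G.wlam_eq x w hchain
  have hexp : Complex.exp ((α : ℂ) * Complex.I) = -1 := by
    rw [hα, G.exp_walpha w e (G.rev e) hhead hlast, G.rho_rev]
    rw [neg_div, div_self (G.rho_ne_zero e)]
  have hn2 : n * n = -1 := by
    rw [hn, ← Complex.exp_add, ← hexp]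
    congr 1
    ring
  have hnI : n = Complex.I ∨ n = -Complex.I := by
    have hfac : (n - Complex.I) * (n + Complex.I) = 0 := by
      have hII : Complex.I * Complex.I = -1 := Complex.I_mul_I
      linear_combination hn2 - hII
    rcases mul_eq_zero.mp hfac with h | h
    · exact Or.inl (sub_eq_zero.mp h)
    · exact Or.inr (eq_neg_of_add_eq_zero_left h)
  constructor
  · -- λ(w) = -λ(w⁻¹)
    have hch' := G.chain'_wrev w hchain
    have h2 : G.wlam x (G.wrev w) = ((G.wx x (G.wrev w) : ℝ) : ℂ) *
        Complex.exp (Complex.I / 2 * ((G.walpha (G.wrev w) : ℝ) : ℂ)) :=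
      G.wlam_eq x (G.wrev w) hch'
    rw [G.walpha_wrev w hchain, G.wx_wrev x w e hhead hlast hlen] at h2
    have hninv : Complex.exp (Complex.I / 2 * ((-α : ℝ) : ℂ)) = -n := by
      have hprod : n * Complex.exp (Complex.I / 2 * ((-α : ℝ) : ℂ)) = 1 := by
        rw [hn, ← Complex.exp_add]
        rw [show Complex.I / 2 * (α : ℂ) + Complex.I / 2 * ((-α : ℝ) : ℂ) = 0 by
          push_cast; ring]
        exact Complex.exp_zero
      have hprod2 : n * (-n) = 1 := by rw [mul_neg, hn2, neg_neg]
      have hnne : n ≠ 0 := by rw [hn]; exact Complex.exp_ne_zero _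
      exact mul_left_cancel₀ hnne (hprod.trans hprod2.symm)
    rw [h1, h2, ← hα, hninv]
    ring
  · rcases hnI with h | h
    · left; rw [h1, h]; ring
    · right; rw [h1, h]; ring
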